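/- Let γ = (X^ref, Y^ref) : ℝ → ℝ² be a differentiable curve, L > 0, p = (X, Y) ∈ ℝ², and suppose θ_P ∈ (0, L) minimizes θ ↦ ‖p − γ(θ)‖² over [0, L]. Suppose that at θ_P the tangent satisfies γ'(θ_P) = r·(cos Φ, sin Φ) for some r > 0 and some angle Φ ∈ ℝ. Then the absolute value of the contouring error at the projection equals the orthogonal distance of p from the curve: |sin Φ · (X − X^ref(θ_P)) − cos Φ · (Y − Y^ref(θ_P))| = ‖p − γ(θ_P)‖ = min over θ ∈ [0, L] of ‖p − γ(θ)‖. -/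

import Mathlib

open Real Set

/-- At the exact projection onto a differentiable reference curve, the absolute
value of the contouring error equals the orthogonal distance of the point from
the curve, which is the minimal distance over the whole curve. -/
theorem contouring_error_is_orthogonal_distance
    (Xref Yref : ℝ → ℝ) (L : ℝ) (hL : 0 < L)
    (X Y : ℝ) (θP : ℝ) (hθP : θP ∈ Set.Ioo 0 L)
    (hmin : IsMinOn (fun θ => (X - Xref θ) ^ 2 + (Y - Yref θ) ^ 2)
      (Set.Icc 0 L) θP)
    (r Φ : ℝ) (hr : 0 < r)
    (hX : HasDerivAt Xref (r * Real.cos Φ) θP)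
    (hY : HasDerivAt Yref (r * Real.sin Φ) θP) :
    |Real.sin Φ * (X - Xref θP) - Real.cos Φ * (Y - Yref θP)| =
      Real.sqrt ((X - Xref θP) ^ 2 + (Y - Yref θP) ^ 2) ∧
    ∀ θ ∈ Set.Icc 0 L,
      Real.sqrt ((X - Xref θP) ^ 2 + (Y - Yref θP) ^ 2) ≤
        Real.sqrt ((X - Xref θ) ^ 2 + (Y - Yref θ) ^ 2) := by
  have hderiv : HasDerivAt (fun θ => (X - Xref θ) ^ 2 + (Y - Yref θ) ^ 2)
      (2 * (X - Xref θP) * (0 - r * Real.cos Φ) +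
        2 * (Y - Yref θP) * (0 - r * Real.sin Φ)) θP := by
    have h1 := (((hasDerivAt_const θP X).sub hX).pow 2)
    have h2 := (((hasDerivAt_const θP Y).sub hY).pow 2)
    exact (h1.add h2).congr_deriv (by norm_num)
  have hloc : IsLocalMin (fun θ => (X - Xref θ) ^ 2 + (Y - Yref θ) ^ 2) θP :=
    hmin.isLocalMin (Icc_mem_nhds hθP.1 hθP.2)
  have hzero := hloc.hasDerivAt_eq_zero hderiv
  have horth : Real.cos Φ * (X - Xref θP) + Real.sin Φ * (Y - Yref θP) = 0 := by
    have h : r * (Real.cos Φ * (X - Xref θP) + Real.sin Φ * (Y - Yref θP)) = 0 := by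
      nlinarith [hzero]
    rcases mul_eq_zero.mp h with h | h
    · exact absurd h hr.ne'
    · exact h
  constructor
  · rw [← Real.sqrt_sq_eq_abs]
    congr 1
    have hpyth := Real.sin_sq_add_cos_sq Φ
    nlinarith [horth]
  · intro θ hθ
    exact Real.sqrt_le_sqrt (hmin hθ)
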